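/- (Gale's evenness criterion) Let x₁,…,xₙ ∈ ℝᵈ be such that all (d+1)×(d+1) minors of the matrix with columns (1,x_i) have the same sign. Then for an index set I = {i₁,…,i_d} ⊆ {1,…,n}, the set {x_i : i ∈ I} is the vertex set of a facet of conv(x₁,…,xₙ) if and only if the parity of #{i ∈ I : i > j} is the same for all j ∈ {1,…,n} ∖ I. -/

import Mathlib

noncomputable section

/-- The `(d+1)×(d+1)` matrix whose `j`-th column is `(1, cols j)`. -/
def liftMat {d : ℕ} (cols : Fin (d + 1) → Fin d → ℝ) : Matrix (Fin (d + 1)) (Fin (d + 1)) ℝ :=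
  Matrix.of fun i j => Fin.cases (motive := fun _ => ℝ) 1 (fun r => cols j r) i

/-- The `(d+1) × n` matrix with columns `(1, x i)` is positive: all maximal minors
(columns taken in increasing order) are positive. -/
def PosMat {d n : ℕ} (x : Fin n → Fin d → ℝ) : Prop :=
  ∀ S : Fin (d + 1) → Fin n, StrictMono S → 0 < (liftMat fun k => x (S k)).det

/-- `F` is a face of `P`: the set of maximizers in `P` of some linear functional. -/
def IsFace {d : ℕ} (P F : Set (Fin d → ℝ)) : Prop :=
  ∃ f : (Fin d → ℝ) →ₗ[ℝ] ℝ, ∃ c : ℝ,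
    (∀ y ∈ P, f y ≤ c) ∧ F = {y ∈ P | f y = c}

/-- `F` is a facet of the `d`-dimensional polytope `P`: a face of dimension `d − 1`. -/
def IsFacet {d : ℕ} (P F : Set (Fin d → ℝ)) : Prop :=
  IsFace P F ∧ Module.finrank ℝ (vectorSpan ℝ F) = d - 1

open Matrix Finset

namespace GaleAux

variable {d n : ℕ}

/-- The matrix whose `q`-th row is `(1, rows q)`. -/
def rmat (rows : Fin (d + 1) → Fin d → ℝ) : Matrix (Fin (d + 1)) (Fin (d + 1)) ℝ :=
  Matrix.of fun q => Fin.cons 1 (rows q)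

lemma liftMat_det (cols : Fin (d + 1) → Fin d → ℝ) :
    (liftMat cols).det = (rmat cols).det := by
  rw [show liftMat cols = (rmat cols)ᵀ from rfl, Matrix.det_transpose]

/-- Matrix with first row `(1,y)` and remaining rows `(1, b k)`. -/
def Arows (b : Fin d → Fin d → ℝ) (y : Fin d → ℝ) : Matrix (Fin (d + 1)) (Fin (d + 1)) ℝ :=
  rmat (Fin.cons y b)

def Gd (b : Fin d → Fin d → ℝ) (y : Fin d → ℝ) : ℝ := (Arows b y).det

lemma Arows_row_zero (b : Fin d → Fin d → ℝ) (y : Fin d → ℝ) :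
    (Arows b y) 0 = Fin.cons 1 y := by
  funext i; simp [Arows, rmat]

lemma Arows_row_succ (b : Fin d → Fin d → ℝ) (y : Fin d → ℝ) (k : Fin d) :
    (Arows b y) (Fin.succ k) = Fin.cons 1 (b k) := by
  funext i; simp [Arows, rmat]

lemma Arows_eq_updateRow (b : Fin d → Fin d → ℝ) (y : Fin d → ℝ) :
    Arows b y = (Arows b 0).updateRow 0 (Fin.cons 1 y) := by
  ext q i
  refine Fin.cases ?_ ?_ q
  · rw [Matrix.updateRow_self]
    simp [Arows, rmat]
  · intro k
    rw [Matrix.updateRow_ne (Fin.succ_ne_zero k)]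
    simp [Arows, rmat]

lemma cons_add_cons (a b : ℝ) (u v : Fin d → ℝ) :
    (Fin.cons (a + b) (u + v) : Fin (d+1) → ℝ) = Fin.cons a u + Fin.cons b v := by
  funext i; refine Fin.cases ?_ ?_ i <;> simp

lemma cons_smul (a : ℝ) (b : ℝ) (u : Fin d → ℝ) :
    (Fin.cons (a * b) (a • u) : Fin (d+1) → ℝ) = a • (Fin.cons b u : Fin (d+1) → ℝ) := by
  funext i; refine Fin.cases ?_ ?_ i <;> simp

/-- linear part of `Gd b`. -/
def glin (b : Fin d → Fin d → ℝ) : (Fin d → ℝ) →ₗ[ℝ] ℝ where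
  toFun y := ((Arows b 0).updateRow 0 (Fin.cons 0 y)).det
  map_add' u v := by
    rw [show (Fin.cons (0:ℝ) (u + v) : Fin (d+1) → ℝ) = Fin.cons 0 u + Fin.cons 0 v by
      simpa using cons_add_cons 0 0 u v]
    rw [Matrix.det_updateRow_add]
  map_smul' a u := by
    rw [show (Fin.cons (0:ℝ) (a • u) : Fin (d+1) → ℝ) = a • (Fin.cons 0 u : Fin (d+1) → ℝ) by
      simpa using cons_smul a 0 u]
    rw [Matrix.det_updateRow_smul]
    simp

lemma Gd_eq (b : Fin d → Fin d → ℝ) (y : Fin d → ℝ) :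
    Gd b y = Gd b 0 + glin b y := by
  have h1 : (Fin.cons (1:ℝ) y : Fin (d+1) → ℝ) = Fin.cons 1 0 + Fin.cons 0 y := by
    simpa using cons_add_cons 1 0 0 y
  rw [Gd, Arows_eq_updateRow, h1, Matrix.det_updateRow_add,
    show (Fin.cons (1:ℝ) 0 : Fin (d+1) → ℝ) = (Arows b 0) 0 from (Arows_row_zero b 0).symm,
    Matrix.updateRow_eq_self]
  rfl

lemma convex_Gd_zero (b : Fin d → Fin d → ℝ) : Convex ℝ {y | Gd b y = 0} := by
  have h : {y | Gd b y = 0} = {y | glin b y = -(Gd b 0)} := by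
    ext y
    rw [Set.mem_setOf_eq, Set.mem_setOf_eq, Gd_eq b y]
    constructor <;> intro h <;> linarith
  rw [h]
  exact convex_hyperplane (glin b).isLinear _

lemma dot_cons (a : ℝ) (u : Fin d → ℝ) (v0 : ℝ) (v' : Fin d → ℝ) :
    (Fin.cons a u : Fin (d+1) → ℝ) ⬝ᵥ (Fin.cons v0 v' : Fin (d+1) → ℝ)
      = a * v0 + u ⬝ᵥ v' := by
  simp [dotProduct, Fin.sum_univ_succ]

lemma linmap_sum (f : (Fin d → ℝ) →ₗ[ℝ] ℝ) (y : Fin d → ℝ) :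
    f y = ∑ r, y r * f (Pi.single r 1) := by
  conv_lhs => rw [pi_eq_sum_univ y]
  rw [map_sum]
  refine Finset.sum_congr rfl fun r _ => ?_
  rw [show (fun j => if r = j then (1:ℝ) else 0) = Pi.single r 1 by
    funext j; simp [Pi.single_apply, eq_comm]]
  rw [LinearMap.map_smul, smul_eq_mul]

/-- vector representing the affine functional `Gd b`. -/
def vG (b : Fin d → Fin d → ℝ) : Fin (d+1) → ℝ :=
  Fin.cons (Gd b 0) (fun r => glin b (Pi.single r 1))

lemma dot_vG (b : Fin d → Fin d → ℝ) (y : Fin d → ℝ) :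
    (Fin.cons 1 y : Fin (d+1) → ℝ) ⬝ᵥ vG b = Gd b y := by
  rw [vG, dot_cons, one_mul, Gd_eq b y]
  congr 1
  rw [linmap_sum (glin b) y]
  simp [dotProduct]

/-- vector representing the affine functional `f - c`. -/
def vF (f : (Fin d → ℝ) →ₗ[ℝ] ℝ) (c : ℝ) : Fin (d+1) → ℝ :=
  Fin.cons (-c) (fun r => f (Pi.single r 1))

lemma dot_vF (f : (Fin d → ℝ) →ₗ[ℝ] ℝ) (c : ℝ) (y : Fin d → ℝ) :
    (Fin.cons 1 y : Fin (d+1) → ℝ) ⬝ᵥ vF f c = f y - c := by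
  rw [vF, dot_cons, one_mul, linmap_sum f y]
  simp [dotProduct]
  ring

lemma kernel_dim_one (M : Matrix (Fin (d+1)) (Fin (d+1)) ℝ) (hdet : M.det ≠ 0)
    (v w : Fin (d+1) → ℝ) (hv : ∀ k : Fin d, M (Fin.succ k) ⬝ᵥ v = 0)
    (hw : ∀ k : Fin d, M (Fin.succ k) ⬝ᵥ w = 0) (hw0 : M 0 ⬝ᵥ w ≠ 0) :
    ∃ lam : ℝ, v = lam • w := by
  have hMv : ∀ u : Fin (d+1) → ℝ, (∀ k : Fin d, M (Fin.succ k) ⬝ᵥ u = 0) →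
      M *ᵥ u = (M 0 ⬝ᵥ u) • (Pi.single 0 1 : Fin (d+1) → ℝ) := by
    intro u hu
    funext q
    refine Fin.cases ?_ ?_ q
    · simp [Matrix.mulVec]
    · intro k
      simp [Matrix.mulVec, hu k, Pi.single_eq_of_ne (Fin.succ_ne_zero k)]
  have hinv : M⁻¹ * M = 1 := Matrix.nonsing_inv_mul M (isUnit_iff_ne_zero.2 hdet)
  have key : ∀ u : Fin (d+1) → ℝ, (∀ k : Fin d, M (Fin.succ k) ⬝ᵥ u = 0) →
      u = (M 0 ⬝ᵥ u) • (M⁻¹ *ᵥ (Pi.single 0 1 : Fin (d+1) → ℝ)) := by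
    intro u hu
    calc u = (M⁻¹ * M) *ᵥ u := by rw [hinv, Matrix.one_mulVec]
      _ = M⁻¹ *ᵥ (M *ᵥ u) := (Matrix.mulVec_mulVec u M⁻¹ M).symm
      _ = M⁻¹ *ᵥ ((M 0 ⬝ᵥ u) • (Pi.single 0 1 : Fin (d+1) → ℝ)) := by rw [hMv u hu]
      _ = (M 0 ⬝ᵥ u) • (M⁻¹ *ᵥ (Pi.single 0 1 : Fin (d+1) → ℝ)) := by
          rw [Matrix.mulVec_smul]
  have hv' := key v hv
  have hw' := key w hw
  refine ⟨(M 0 ⬝ᵥ v) * (M 0 ⬝ᵥ w)⁻¹, ?_⟩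
  calc v = (M 0 ⬝ᵥ v) • (M⁻¹ *ᵥ (Pi.single 0 1 : Fin (d+1) → ℝ)) := hv'
    _ = ((M 0 ⬝ᵥ v) * ((M 0 ⬝ᵥ w)⁻¹ * (M 0 ⬝ᵥ w))) •
        (M⁻¹ *ᵥ (Pi.single 0 1 : Fin (d+1) → ℝ)) := by
          rw [inv_mul_cancel₀ hw0, mul_one]
    _ = ((M 0 ⬝ᵥ v) * (M 0 ⬝ᵥ w)⁻¹) •
        ((M 0 ⬝ᵥ w) • (M⁻¹ *ᵥ (Pi.single 0 1 : Fin (d+1) → ℝ))) := by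
          rw [smul_smul, mul_assoc]
    _ = ((M 0 ⬝ᵥ v) * (M 0 ⬝ᵥ w)⁻¹) • w := by rw [← hw']

lemma filter_lt_count (σ : Fin d → Fin n) (hσ : StrictMono σ) (j : Fin n) (k : Fin d) :
    σ k < j ↔ (k : ℕ) < (Finset.univ.filter (fun i : Fin d => σ i < j)).card := by
  constructor
  · intro h
    have hsub : Finset.Iic k ⊆ Finset.univ.filter (fun i : Fin d => σ i < j) := by
      intro k' hk'
      exact Finset.mem_filter.2 ⟨Finset.mem_univ _,
        lt_of_le_of_lt (hσ.monotone (Finset.mem_Iic.1 hk')) h⟩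
    have := Finset.card_le_card hsub
    rw [Fin.card_Iic] at this
    omega
  · intro h
    by_contra hc
    have hsub : Finset.univ.filter (fun i : Fin d => σ i < j) ⊆ Finset.Iio k := by
      intro k' hk'
      rw [Finset.mem_Iio]
      by_contra hk
      exact hc (lt_of_le_of_lt (hσ.monotone (le_of_not_gt hk)) ((Finset.mem_filter.1 hk').2))
    have := Finset.card_le_card hsub
    rw [Fin.card_Iio] at this
    omega

lemma sign_formula {x : Fin n → Fin d → ℝ} {ε : ℝ}
    (hminor : ∀ S : Fin (d + 1) → Fin n, StrictMono S →
      Real.sign (liftMat fun k => x (S k)).det = ε)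
    (σ : Fin d → Fin n) (hσ : StrictMono σ) (j : Fin n) (hj : ∀ k, σ k ≠ j) :
    Real.sign (Gd (fun k => x (σ k)) (x j)) =
      (-1) ^ ((Finset.univ.filter (fun k : Fin d => σ k < j)).card) * ε := by
  set p := (Finset.univ.filter (fun k : Fin d => σ k < j)).card with hp
  have hpd : p ≤ d := by
    have := Finset.card_filter_le Finset.univ (fun k : Fin d => σ k < j)
    simpa using this
  have hlt : ∀ k : Fin d, σ k < j ↔ (k : ℕ) < p := fun k => filter_lt_count σ hσ j k
  have hgt : ∀ k : Fin d, p ≤ (k : ℕ) → j < σ k := by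
    intro k hk
    rcases lt_or_gt_of_ne (hj k) with h | h
    · exact absurd ((hlt k).1 h) (by omega)
    · exact h
  set pf : Fin (d+1) := ⟨p, by omega⟩ with hpf
  set T : Fin (d+1) → Fin n := Fin.cons j σ with hT
  have hS1 : ∀ q : Fin (d+1), (hq : (q : ℕ) < p) →
      T (pf.cycleRange q) = σ ⟨q, by omega⟩ := by
    intro q hq
    rw [Fin.cycleRange_of_lt (show q < pf by rw [Fin.lt_def]; exact hq)]
    have : (q + 1 : Fin (d+1)) = Fin.succ ⟨(q : ℕ), by omega⟩ := by
      rw [Fin.ext_iff, Fin.val_add_one_of_lt]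
      · rfl
      · rw [Fin.lt_def]
        simp [Fin.last]
        omega
    rw [this, hT, Fin.cons_succ]
  have hS2 : T (pf.cycleRange pf) = j := by
    rw [Fin.cycleRange_self, hT, Fin.cons_zero]
  have hS3 : ∀ q : Fin (d+1), (hq : p < (q : ℕ)) →
      T (pf.cycleRange q) = σ ⟨(q : ℕ) - 1, by omega⟩ := by
    intro q hq
    rw [Fin.cycleRange_of_gt (show pf < q by rw [Fin.lt_def]; exact hq)]
    have hq2 : q = Fin.succ ⟨(q : ℕ) - 1, by omega⟩ := by
      rw [Fin.ext_iff]
      simp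
      omega
    conv_lhs => rw [hq2]
    rw [hT, Fin.cons_succ]
  have hmono : StrictMono (fun q => T (pf.cycleRange q)) := by
    intro a b hab
    have hab' : (a : ℕ) < (b : ℕ) := hab
    show T (pf.cycleRange a) < T (pf.cycleRange b)
    rcases lt_trichotomy ((a : ℕ)) p with ha | ha | ha <;>
      rcases lt_trichotomy ((b : ℕ)) p with hb | hb | hb
    · rw [hS1 a ha, hS1 b hb]
      exact hσ (by rw [Fin.lt_def]; exact hab')
    · have hbp : b = pf := by rw [Fin.ext_iff]; exact hb
      rw [hS1 a ha, hbp, hS2]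
      exact (hlt _).2 ha
    · rw [hS1 a ha, hS3 b hb]
      refine lt_trans ((hlt _).2 ha) (hgt _ ?_)
      show p ≤ (b:ℕ) - 1
      omega
    · omega
    · omega
    · have hap : a = pf := by rw [Fin.ext_iff]; exact ha
      rw [hap, hS2, hS3 b hb]
      refine hgt _ ?_
      show p ≤ (b:ℕ) - 1
      omega
    · omega
    · omega
    · rw [hS3 a ha, hS3 b hb]
      refine hσ ?_
      rw [Fin.lt_def]
      show (a:ℕ) - 1 < (b:ℕ) - 1
      omega
  have hε := hminor _ hmono
  rw [liftMat_det] at hε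
  have hsub : rmat (fun k => x (T (pf.cycleRange k)))
      = (rmat (fun q => x (T q))).submatrix (pf.cycleRange : Equiv.Perm (Fin (d+1))) id := by
    ext q i
    rfl
  rw [hsub, Matrix.det_permute, Fin.sign_cycleRange] at hε
  have hTA : rmat (fun q => x (T q)) = Arows (fun k => x (σ k)) (x j) := by
    ext q i
    refine Fin.cases ?_ ?_ q <;> simp [rmat, Arows, hT]
  rw [hTA] at hε
  have hcast : ((((-1 : ℤˣ) ^ (pf : ℕ) : ℤˣ) : ℤ) : ℝ) = (-1 : ℝ) ^ p := by
    push_cast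
    norm_num
    rfl
  rw [show ((pf : Fin (d+1)) : ℕ) = p from rfl] at hε
  rw [hcast] at hε
  rcases Nat.even_or_odd p with hpe | hpe
  · rw [hpe.neg_one_pow, one_mul] at hε ⊢
    exact hε
  · rw [hpe.neg_one_pow, neg_one_mul, Real.sign_neg] at hε
    rw [hpe.neg_one_pow, neg_one_mul]
    have hGA : Gd (fun k => x (σ k)) (x j) = (Arows (fun k => x (σ k)) (x j)).det := rfl
    rw [hGA]
    linarith

end GaleAux

/-- Gale's evenness criterion: if all maximal minors of the `(d+1)×n`
matrix with columns `(1, x_i)` have the same (nonzero) sign `ε`, then a `d`-element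
index set `I` spans a facet of `conv(x₁,…,xₙ)` iff the parity of `#{i ∈ I : i > j}`
is the same for all `j ∉ I`. -/
theorem gale_evenness {d n : ℕ} (hn : d + 1 ≤ n) (x : Fin n → Fin d → ℝ)
    (hinj : Function.Injective x)
    (ε : ℝ) (hε : ε = 1 ∨ ε = -1)
    (hminor : ∀ S : Fin (d + 1) → Fin n, StrictMono S →
      Real.sign (liftMat fun k => x (S k)).det = ε)
    (I : Finset (Fin n)) (hI : I.card = d) :
    IsFacet (convexHull ℝ (Set.range x)) (convexHull ℝ (x '' I)) ↔
      ∀ j ∉ I, ∀ j' ∉ I,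
        (I.filter fun i => j < i).card % 2 = (I.filter fun i => j' < i).card % 2 := by
  classical
  set σf : Fin d ↪o Fin n := I.orderEmbOfFin hI with hσf
  set b : Fin d → Fin d → ℝ := fun k => x (σf k) with hb
  have hσmono : StrictMono (σf : Fin d → Fin n) := σf.strictMono
  have hmem : ∀ k, σf k ∈ I := fun k => I.orderEmbOfFin_mem hI k
  have hsurj : ∀ i ∈ I, ∃ k, σf k = i := by
    intro i hi
    have hr := I.range_orderEmbOfFin hI
    have : i ∈ Set.range (σf : Fin d → Fin n) := by
      rw [hσf, hr]; exact hi
    exact this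
  have hnej : ∀ j ∉ I, ∀ k, σf k ≠ j := fun j hj k he => hj (he ▸ hmem k)
  have hGzero : ∀ k, GaleAux.Gd b (x (σf k)) = 0 := by
    intro k
    refine Matrix.det_zero_of_row_eq (i := 0) (j := Fin.succ k) (Fin.succ_ne_zero k).symm ?_
    rw [GaleAux.Arows_row_zero, GaleAux.Arows_row_succ]
  have hGhull : ∀ z ∈ convexHull ℝ (x '' ↑I), GaleAux.Gd b z = 0 := by
    have h1 : x '' ↑I ⊆ {y | GaleAux.Gd b y = 0} := by
      rintro z ⟨i, hi, rfl⟩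
      obtain ⟨k, rfl⟩ := hsurj i hi
      exact hGzero k
    exact fun z hz => convexHull_min h1 (GaleAux.convex_Gd_zero b) hz
  have hpcard : ∀ j : Fin n,
      (Finset.univ.filter (fun k : Fin d => σf k < j)).card
        = (I.filter (fun i => i < j)).card := by
    intro j
    have hIimg : I = Finset.univ.image (σf : Fin d → Fin n) := by
      apply Finset.coe_injective
      rw [Finset.coe_image, Finset.coe_univ, Set.image_univ, I.range_orderEmbOfFin hI]
    conv_rhs => rw [hIimg]
    rw [Finset.filter_image, Finset.card_image_of_injective _ hσmono.injective]
  have hpm : ∀ j ∉ I,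
      (Finset.univ.filter (fun k : Fin d => σf k < j)).card
        + (I.filter (fun i => j < i)).card = d := by
    intro j hj
    rw [hpcard j]
    have hsplit := Finset.card_filter_add_card_filter_not (s := I)
      (p := fun i => i < j)
    rw [hI] at hsplit
    have heq : I.filter (fun i => ¬ i < j) = I.filter (fun i => j < i) := by
      apply Finset.filter_congr
      intro i hi
      have hne : i ≠ j := fun h => hj (h ▸ hi)
      constructor
      · intro h; exact lt_of_le_of_ne (not_lt.1 h) (Ne.symm hne)
      · intro h; exact not_lt.2 h.le
    rw [heq] at hsplit
    exact hsplit
  have hex : ∃ j₀, j₀ ∉ I := by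
    by_contra h
    push_neg at h
    have hsub : Finset.univ ⊆ I := fun i _ => h i
    have := Finset.card_le_card hsub
    rw [Finset.card_univ, Fintype.card_fin, hI] at this
    omega
  obtain ⟨j₀, hj₀⟩ := hex
  have hsign : ∀ j ∉ I, Real.sign (GaleAux.Gd b (x j)) =
      (-1) ^ ((Finset.univ.filter (fun k : Fin d => σf k < j)).card) * ε :=
    fun j hj => GaleAux.sign_formula hminor _ hσmono j (hnej j hj)
  have hεne : ε ≠ 0 := by rcases hε with h | h <;> rw [h] <;> norm_num
  have hGne : ∀ j ∉ I, GaleAux.Gd b (x j) ≠ 0 := by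
    intro j hj h0
    have hsj := hsign j hj
    rw [h0, Real.sign_zero] at hsj
    exact (mul_ne_zero (pow_ne_zero _ (by norm_num)) hεne) hsj.symm
  set M : Matrix (Fin (d+1)) (Fin (d+1)) ℝ := GaleAux.Arows b (x j₀) with hM
  have hdet : M.det ≠ 0 := by rw [hM]; exact hGne j₀ hj₀
  have hrowsucc : ∀ k : Fin d, M (Fin.succ k) = Fin.cons 1 (x (σf k)) := fun k => by
    rw [hM]; exact GaleAux.Arows_row_succ b (x j₀) k
  have hrow0 : M 0 = Fin.cons 1 (x j₀) := by
    rw [hM]; exact GaleAux.Arows_row_zero b (x j₀)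
  constructor
  · rintro ⟨⟨f, c, hfc, hF⟩, -⟩
    have hmemP : ∀ i : Fin n, x i ∈ convexHull ℝ (Set.range x) :=
      fun i => subset_convexHull ℝ _ ⟨i, rfl⟩
    have hfI : ∀ k, f (x (σf k)) = c := by
      intro k
      have hx : x (σf k) ∈ convexHull ℝ (x '' ↑I) :=
        subset_convexHull ℝ _ ⟨σf k, hmem k, rfl⟩
      rw [hF] at hx
      exact hx.2
    have hstrict : ∀ j ∉ I, f (x j) < c := by
      intro j hj
      rcases lt_or_eq_of_le (hfc _ (hmemP j)) with h | h
      · exact h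
      · exfalso
        apply hGne j hj
        apply hGhull
        rw [hF]
        exact ⟨hmemP j, h⟩
    obtain ⟨lam, hlam⟩ := GaleAux.kernel_dim_one M hdet (GaleAux.vF f c) (GaleAux.vG b)
      (fun k => by rw [hrowsucc k, GaleAux.dot_vF, hfI k, sub_self])
      (fun k => by rw [hrowsucc k, GaleAux.dot_vG, hGzero k])
      (by rw [hrow0, GaleAux.dot_vG]; exact hGne j₀ hj₀)
    have hrel : ∀ y : Fin d → ℝ, f y - c = lam * GaleAux.Gd b y := by
      intro y
      rw [← GaleAux.dot_vF f c y, hlam, dotProduct_smul, smul_eq_mul,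
        GaleAux.dot_vG]
    have key : ∀ j ∉ I, lam * GaleAux.Gd b (x j) < 0 := by
      intro j hj
      rw [← hrel]
      exact sub_neg.2 (hstrict j hj)
    intro j hj j' hj'
    have hsgn_eq : Real.sign (GaleAux.Gd b (x j)) = Real.sign (GaleAux.Gd b (x j')) := by
      have h1 := key j hj
      have h2 := key j' hj'
      rcases lt_trichotomy lam 0 with h | h | h
      · have g1 : 0 < GaleAux.Gd b (x j) := by nlinarith
        have g2 : 0 < GaleAux.Gd b (x j') := by nlinarith
        rw [Real.sign_of_pos g1, Real.sign_of_pos g2]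
      · rw [h, zero_mul] at h1; linarith
      · have g1 : GaleAux.Gd b (x j) < 0 := by nlinarith
        have g2 : GaleAux.Gd b (x j') < 0 := by nlinarith
        rw [Real.sign_of_neg g1, Real.sign_of_neg g2]
    rw [hsign j hj, hsign j' hj'] at hsgn_eq
    have hpp := mul_right_cancel₀ hεne hsgn_eq
    have h1 := hpm j hj
    have h2 := hpm j' hj'
    have hparity : (Finset.univ.filter (fun k : Fin d => σf k < j)).card % 2
        = (Finset.univ.filter (fun k : Fin d => σf k < j')).card % 2 := by
      rcases Nat.even_or_odd ((Finset.univ.filter (fun k : Fin d => σf k < j)).card)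
          with he1 | he1 <;>
        rcases Nat.even_or_odd ((Finset.univ.filter (fun k : Fin d => σf k < j')).card)
          with he2 | he2
      · rw [Nat.even_iff.1 he1, Nat.even_iff.1 he2]
      · exfalso; rw [he1.neg_one_pow, he2.neg_one_pow] at hpp; norm_num at hpp
      · exfalso; rw [he1.neg_one_pow, he2.neg_one_pow] at hpp; norm_num at hpp
      · rw [Nat.odd_iff.1 he1, Nat.odd_iff.1 he2]
    omega
  · intro hpar
    have hsame : ∀ j ∉ I, Real.sign (GaleAux.Gd b (x j))
        = Real.sign (GaleAux.Gd b (x j₀)) := by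
      intro j hj
      rw [hsign j hj, hsign j₀ hj₀]
      congr 1
      have h1 := hpm j hj
      have h2 := hpm j₀ hj₀
      have hm := hpar j hj j₀ hj₀
      have hpe : (Finset.univ.filter (fun k : Fin d => σf k < j)).card % 2
          = (Finset.univ.filter (fun k : Fin d => σf k < j₀)).card % 2 := by omega
      rcases Nat.even_or_odd ((Finset.univ.filter (fun k : Fin d => σf k < j)).card)
          with he1 | he1 <;>
        rcases Nat.even_or_odd ((Finset.univ.filter (fun k : Fin d => σf k < j₀)).card)
          with he2 | he2
      · rw [he1.neg_one_pow, he2.neg_one_pow]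
      · exfalso
        rw [Nat.even_iff.1 he1] at hpe
        rw [Nat.odd_iff.1 he2] at hpe
        omega
      · exfalso
        rw [Nat.odd_iff.1 he1] at hpe
        rw [Nat.even_iff.1 he2] at hpe
        omega
      · rw [he1.neg_one_pow, he2.neg_one_pow]
    set s : ℝ := Real.sign (GaleAux.Gd b (x j₀)) with hs
    have hspos : ∀ j ∉ I, 0 < s * GaleAux.Gd b (x j) := by
      intro j hj
      have h := Real.sign_mul_pos_of_ne_zero _ (hGne j hj)
      rwa [hsame j hj] at h
    set f : (Fin d → ℝ) →ₗ[ℝ] ℝ := (-s) • GaleAux.glin b with hf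
    set c : ℝ := s * GaleAux.Gd b 0 with hc
    have haff : ∀ y, f y - c = -(s * GaleAux.Gd b y) := by
      intro y
      rw [hf, hc, GaleAux.Gd_eq b y]
      simp only [LinearMap.smul_apply, smul_eq_mul]
      ring
    have hfI' : ∀ k, f (x (σf k)) = c := by
      intro k
      have h := haff (x (σf k))
      rw [hGzero k, mul_zero, neg_zero] at h
      linarith
    have hfless : ∀ i : Fin n, f (x i) ≤ c := by
      intro i
      by_cases hi : i ∈ I
      · obtain ⟨k, rfl⟩ := hsurj i hi
        exact le_of_eq (hfI' k)
      · have h1 := hspos i hi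
        have h2 := haff (x i)
        linarith
    have hfstrong : ∀ i ∉ I, f (x i) < c := by
      intro i hi
      have h1 := hspos i hi
      have h2 := haff (x i)
      linarith
    constructor
    · refine ⟨f, c, ?_, ?_⟩
      · intro y hy
        have hsub2 : Set.range x ⊆ {y | f y ≤ c} := by
          rintro z ⟨i, rfl⟩; exact hfless i
        exact convexHull_min hsub2 (convex_halfSpace_le f.isLinear c) hy
      · apply Set.Subset.antisymm
        · intro y hy
          refine ⟨convexHull_mono (Set.image_subset_range x ↑I) hy, ?_⟩
          have hsub2 : x '' ↑I ⊆ {y | f y = c} := by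
            rintro z ⟨i, hi, rfl⟩
            obtain ⟨k, rfl⟩ := hsurj i hi
            exact hfI' k
          exact convexHull_min hsub2 (convex_hyperplane f.isLinear c) hy
        · rintro y ⟨hyP, hyc⟩
          rw [convexHull_range_eq_exists_affineCombination] at hyP
          obtain ⟨t, w, hw0, hw1, hyy⟩ := hyP
          rw [Finset.affineCombination_eq_linear_combination t x w hw1] at hyy
          have hfy : ∑ i ∈ t, w i * f (x i) = c := by
            rw [← hyc, ← hyy, map_sum]
            refine Finset.sum_congr rfl fun i _ => ?_
            rw [LinearMap.map_smul, smul_eq_mul]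
          have hsum0 : ∑ i ∈ t, w i * (c - f (x i)) = 0 := by
            simp only [mul_sub]
            rw [Finset.sum_sub_distrib, ← Finset.sum_mul, hw1, one_mul, hfy, sub_self]
          have hzero : ∀ i ∈ t, i ∉ I → w i = 0 := by
            intro i hit hiI
            have hterm := (Finset.sum_eq_zero_iff_of_nonneg
              (fun i hi => mul_nonneg (hw0 i hi) (sub_nonneg.2 (hfless i)))).1 hsum0 i hit
            have hposc : 0 < c - f (x i) := sub_pos.2 (hfstrong i hiI)
            rcases mul_eq_zero.1 hterm with h | h
            · exact h
            · linarith
          have hy' : ∑ i ∈ t.filter (fun i => i ∈ I), w i • x i = y := by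
            rw [← hyy]
            apply Finset.sum_filter_of_ne
            intro i hit hne
            by_contra hiI
            exact hne (by rw [hzero i hit hiI, zero_smul])
          have hw1' : ∑ i ∈ t.filter (fun i => i ∈ I), w i = 1 := by
            rw [← hw1]
            apply Finset.sum_filter_of_ne
            intro i hit hne
            by_contra hiI
            exact hne (hzero i hit hiI)
          have hcm := Finset.centerMass_mem_convexHull (t.filter (fun i => i ∈ I))
            (fun i hi => hw0 i (Finset.mem_filter.1 hi).1)
            (by rw [hw1']; norm_num)
            (fun i hi => show x i ∈ x '' ↑I from ⟨i, (Finset.mem_filter.1 hi).2, rfl⟩)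
          rwa [Finset.centerMass_eq_of_sum_1 _ _ hw1', hy'] at hcm
    · rcases Nat.eq_zero_or_pos d with hd | hd
      · subst hd
        have hIempty : I = ∅ := Finset.card_eq_zero.1 hI
        rw [hIempty]
        rw [show ((∅ : Finset (Fin n)) : Set (Fin n)) = (∅ : Set (Fin n)) from
          Finset.coe_empty]
        rw [Set.image_empty, convexHull_empty, vectorSpan_empty]
        simp
      · have haf : AffineIndependent ℝ (fun k => x (σf k)) := by
          rw [affineIndependent_iff]
          intro t w hsum hcomb i hi
          set w' : Fin d → ℝ := fun k => if k ∈ t then w k else 0 with hw'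
          have hsum' : ∑ k, w' k = 0 := by
            rw [hw']
            rw [Finset.sum_ite_mem, Finset.univ_inter]
            exact hsum
          have hcomb' : ∑ k, w' k • x (σf k) = 0 := by
            simp only [hw', ite_smul, zero_smul]
            rw [Finset.sum_ite_mem, Finset.univ_inter]
            exact hcomb
          set u : Fin (d+1) → ℝ := Fin.cons 0 w' with hu
          have hvM : u ᵥ* M = 0 := by
            funext iidx
            have hexp : (u ᵥ* M) iidx = ∑ q, u q * M q iidx := rfl
            rw [hexp, Fin.sum_univ_succ]
            simp only [hu, Fin.cons_zero, Fin.cons_succ, zero_mul, zero_add]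
            refine Fin.cases ?_ ?_ iidx
            · have hone : ∀ k : Fin d, M (Fin.succ k) 0 = 1 := fun k => by
                rw [hrowsucc k]; rfl
              simp only [hone, mul_one]
              simpa using hsum'
            · intro r
              have hentry : ∀ k : Fin d, M (Fin.succ k) (Fin.succ r) = x (σf k) r :=
                fun k => by rw [hrowsucc k, Fin.cons_succ]
              simp only [hentry]
              have h2 := congrFun hcomb' r
              rw [Finset.sum_apply] at h2
              simpa [Pi.smul_apply, smul_eq_mul] using h2
          have hinj2 : Function.Injective (fun v : Fin (d+1) → ℝ => v ᵥ* M) :=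
            Matrix.vecMul_injective_iff_isUnit.2
              ((Matrix.isUnit_iff_isUnit_det M).2 (isUnit_iff_ne_zero.2 hdet))
          have hu0 : u = 0 := hinj2 (by
            show u ᵥ* M = 0 ᵥ* M
            rw [hvM, Matrix.zero_vecMul])
          have hws : w' i = 0 := by
            have := congrFun hu0 (Fin.succ i)
            rwa [hu, Fin.cons_succ] at this
          rw [hw'] at hws
          simpa [hi] using hws
        have hcard : Fintype.card (Fin d) = (d - 1) + 1 := by
          rw [Fintype.card_fin]; omega
        have hfr := haf.finrank_vectorSpan hcard
        have hvs : vectorSpan ℝ (convexHull ℝ (x '' ↑I)) = vectorSpan ℝ (x '' ↑I) := by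
          rw [← direction_affineSpan, ← direction_affineSpan, affineSpan_convexHull]
        have himg : Set.range (fun k => x (σf k)) = x '' ↑I := by
          rw [show (fun k => x (σf k)) = x ∘ (σf : Fin d → Fin n) from rfl,
            Set.range_comp, I.range_orderEmbOfFin hI]
        rw [hvs, ← himg]
        exact hfr
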